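/- Let p ≥ 3 be a prime, k ∈ ℕ₊ with p²(p−1) | k, and r ∈ {1,…,p−2}. Then for every integer n > k/(p−1) such that n mod p ∈ {r+1,…,p−1}, one has A_{p,k−r}(n) ≡ 0 (mod p^{ν_p(k)}). -/

import Mathlib

open PowerSeries Finset

/-- The number of digits equal to `i` in the base-`p` representation of `n`. -/
def Np (p i n : ℕ) : ℕ := (Nat.digits p n).count i

/-- `Dcoef p r n` is the coefficient of `x^n` in `∏_{i=0}^∞ (1 - x^{p^i})^r`.
Since `p ≥ 2`, the factors with index `i > n` do not affect the coefficient of `x^n`,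
so the product may be truncated at `i = n`. -/
noncomputable def Dcoef (p r n : ℕ) : ℤ :=
  PowerSeries.coeff (R := ℤ) n (∏ i ∈ Finset.range (n + 1), (1 - PowerSeries.X ^ p ^ i) ^ r)

/-- `Dp p n = D_{p,p-1}(n)`. -/
noncomputable def Dp (p n : ℕ) : ℤ := Dcoef p (p - 1) n

/-- `Acoef m k n` is the coefficient of `x^n` in `∏_{i=0}^∞ (1 - x^{m^i})^{-k}`,
the number of `k`-colored `m`-ary partitions of `n`.  Here `(1 - X^{m^i})⁻¹` is
realized as `PowerSeries.invOfUnit (1 - X ^ m ^ i) 1`, and since `m ≥ 2` the factors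
with index `i > n` do not affect the coefficient of `x^n`. -/
noncomputable def Acoef (m k n : ℕ) : ℤ :=
  PowerSeries.coeff (R := ℤ) n
    (∏ i ∈ Finset.range (n + 1),
      (PowerSeries.invOfUnit (1 - PowerSeries.X ^ m ^ i) 1) ^ k)



/-- Binomial: `(1-a)^p = 1 - a^p + p*w` for odd prime `p`. -/
lemma aux_pow_p {A : Type*} [CommRing A] {p : ℕ} (hp : p.Prime) (hodd : Odd p) (a : A) :
    ∃ w : A, (1 - a) ^ p = 1 - a ^ p + (p : A) * w := by
  refine ⟨∑ j ∈ Finset.range (p - 1), (-a) ^ (j + 1) * ((p.choose (j + 1) / p : ℕ) : A), ?_⟩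
  have hpp : p - 1 + 1 = p := Nat.succ_pred_eq_of_pos hp.pos
  have h1 : (1 - a) ^ p = ∑ m ∈ Finset.range (p + 1), (-a) ^ m * ((p.choose m : ℕ) : A) := by
    rw [sub_eq_add_neg, add_comm, add_pow]
    exact Finset.sum_congr rfl fun m _ => by rw [one_pow, mul_one]
  have e1 := Finset.sum_range_succ (fun m => (-a) ^ m * ((p.choose m : ℕ) : A)) p
  have e2 := Finset.sum_range_succ' (fun m => (-a) ^ m * ((p.choose m : ℕ) : A)) (p - 1)
  rw [hpp] at e2
  rw [h1, e1, e2]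
  have hmid : ∑ j ∈ Finset.range (p - 1), (-a) ^ (j + 1) * ((p.choose (j + 1) : ℕ) : A)
      = (p : A) * ∑ j ∈ Finset.range (p - 1), (-a) ^ (j + 1) * ((p.choose (j + 1) / p : ℕ) : A) := by
    rw [Finset.mul_sum]
    refine Finset.sum_congr rfl fun j hj => ?_
    have hjlt := Finset.mem_range.mp hj
    have hdv : p ∣ p.choose (j + 1) :=
      hp.dvd_choose_self (Nat.succ_ne_zero j) (by omega)
    have hh : ((p.choose (j + 1) : ℕ) : A) = (p : A) * ((p.choose (j + 1) / p : ℕ) : A) := by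
      rw [← Nat.cast_mul, Nat.mul_div_cancel' hdv]
    rw [hh]
    ring
  rw [hmid, hodd.neg_pow, Nat.choose_self, Nat.choose_zero_right]
  push_cast
  ring

/-- Products of perturbed factors. -/
lemma aux_prod_add {A : Type*} [CommRing A] {ι : Type*} (s : Finset ι) (x : A) (f g : ι → A) :
    ∃ c : A, ∏ i ∈ s, (f i + x * g i) = (∏ i ∈ s, f i) + x * c := by
  classical
  induction s using Finset.induction_on with
  | empty => exact ⟨0, by simp⟩
  | @insert a s ha ih =>
      obtain ⟨c, hc⟩ := ih
      rw [Finset.prod_insert ha, Finset.prod_insert ha, hc]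
      exact ⟨f a * c + g a * ∏ i ∈ s, f i + x * (g a * c), by ring⟩

/-- Key arithmetic: if `p^s ∣ M` then `p^(s+1) ∣ C(M,j) * p^j` for `j ≥ 1`. -/
lemma key_dvd {p : ℕ} (hp : p.Prime) (s M j : ℕ) (hM : p ^ s ∣ M) (hj : 1 ≤ j) :
    p ^ (s + 1) ∣ M.choose j * p ^ j := by
  rcases Nat.lt_or_ge j (s + 1) with hjs | hjs
  · rcases Nat.eq_zero_or_pos M with rfl | hM0
    · rw [Nat.choose_eq_zero_of_lt (by omega)]
      simp
    obtain ⟨j', rfl⟩ : ∃ j', j = j' + 1 := ⟨j - 1, by omega⟩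
    obtain ⟨M', rfl⟩ : ∃ M', M = M' + 1 := ⟨M - 1, by omega⟩
    have hMj : (M' + 1) ∣ (M' + 1).choose (j' + 1) * (j' + 1) := by
      have h := Nat.add_one_mul_choose_eq M' j'
      exact ⟨M'.choose j', h.symm⟩
    have hdCj : p ^ s ∣ (M' + 1).choose (j' + 1) * (j' + 1) := hM.trans hMj
    set j := j' + 1 with hjdef
    have hj0 : j ≠ 0 := by omega
    set a := j.factorization p with hadef
    have hpa : p ^ a ∣ j := Nat.ordProj_dvd j p
    have hu : ¬ p ∣ j / p ^ a := Nat.not_dvd_ordCompl hp hj0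
    have hju : p ^ a * (j / p ^ a) = j := Nat.ordProj_mul_ordCompl_eq_self j p
    have haj : a < j := by
      have h1 : a < 2 ^ a := Nat.lt_two_pow_self
      have h2 : 2 ^ a ≤ p ^ a := Nat.pow_le_pow_left hp.two_le a
      have h3 : p ^ a ≤ j := Nat.le_of_dvd (by omega) hpa
      omega
    have has : a ≤ s := by omega
    have hcop : Nat.Coprime (p ^ s) (j / p ^ a) :=
      Nat.Coprime.pow_left s (hp.coprime_iff_not_dvd.mpr hu)
    have h4 : p ^ s ∣ ((M' + 1).choose j * p ^ a) * (j / p ^ a) := by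
      rwa [mul_assoc, hju]
    have h5 : p ^ s ∣ (M' + 1).choose j * p ^ a := hcop.dvd_of_dvd_mul_right h4
    have h6 : p ^ (s - a) ∣ (M' + 1).choose j := by
      have hrw : p ^ s = p ^ (s - a) * p ^ a := by rw [← pow_add]; congr 1; omega
      rw [hrw] at h5
      exact (Nat.mul_dvd_mul_iff_right (Nat.pow_pos hp.pos)).mp h5
    have h7 : p ^ (a + 1) ∣ p ^ j := pow_dvd_pow p (by omega)
    have hrw2 : p ^ (s + 1) = p ^ (s - a) * p ^ (a + 1) := by
      rw [← pow_add]; congr 1; omega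
    rw [hrw2]
    exact mul_dvd_mul h6 h7
  · exact dvd_mul_of_dvd_right (pow_dvd_pow p hjs) _

/-- Binomial kill: `(x + p*y)^N = x^N` in a ring where `p^v`-divisible naturals vanish. -/
lemma binom_kill {A : Type*} [CommRing A] (p v N : ℕ)
    (hzero : ∀ m : ℕ, p ^ v ∣ m → (m : A) = 0)
    (hch : ∀ j, 1 ≤ j → p ^ v ∣ N.choose j * p ^ j)
    (x y : A) : (x + (p : A) * y) ^ N = x ^ N := by
  rw [add_pow, Finset.sum_range_succ]
  have hz : ∀ m ∈ Finset.range N, x ^ m * ((p : A) * y) ^ (N - m) * ((N.choose m : ℕ) : A) = 0 := by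
    intro m hm
    have hm' := Finset.mem_range.mp hm
    have hdv : p ^ v ∣ N.choose (N - m) * p ^ (N - m) := hch _ (by omega)
    rw [Nat.choose_symm hm'.le] at hdv
    have hc : ((N.choose m * p ^ (N - m) : ℕ) : A) = 0 := hzero _ hdv
    push_cast at hc
    calc x ^ m * ((p : A) * y) ^ (N - m) * ((N.choose m : ℕ) : A)
        = x ^ m * y ^ (N - m) * (((N.choose m : ℕ) : A) * (p : A) ^ (N - m)) := by ring
      _ = 0 := by rw [hc, mul_zero]
  rw [Finset.sum_eq_zero hz, zero_add, Nat.sub_self, pow_zero, mul_one, Nat.choose_self,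
    Nat.cast_one, mul_one]

/-- Closure of "coefficients supported on multiples of p" under multiplication. -/
lemma Qp_mul {A : Type*} [CommRing A] {p : ℕ} {f g : PowerSeries A}
    (hf : ∀ m, ¬ p ∣ m → coeff (R := A) m f = 0) (hg : ∀ m, ¬ p ∣ m → coeff (R := A) m g = 0) :
    ∀ m, ¬ p ∣ m → coeff (R := A) m (f * g) = 0 := by
  intro m hm
  rw [coeff_mul]
  refine Finset.sum_eq_zero fun x hx => ?_
  have hxm : x.1 + x.2 = m := Finset.HasAntidiagonal.mem_antidiagonal.mp hx
  by_cases h1 : p ∣ x.1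
  · have h2 : ¬ p ∣ x.2 := fun h => hm (hxm ▸ Nat.dvd_add h1 h)
    rw [hg _ h2, mul_zero]
  · rw [hf _ h1, zero_mul]

lemma Qp_one {A : Type*} [CommRing A] {p : ℕ} (hp : p ≠ 0) :
    ∀ m, ¬ p ∣ m → coeff (R := A) m (1 : PowerSeries A) = 0 := by
  intro m hm
  have : m ≠ 0 := by rintro rfl; exact hm (dvd_zero p)
  rw [coeff_one, if_neg this]

lemma Qp_pow {A : Type*} [CommRing A] {p : ℕ} (hp : p ≠ 0) {f : PowerSeries A}
    (hf : ∀ m, ¬ p ∣ m → coeff (R := A) m f = 0) (t : ℕ) :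
    ∀ m, ¬ p ∣ m → coeff (R := A) m (f ^ t) = 0 := by
  induction t with
  | zero => rw [pow_zero]; exact Qp_one hp
  | succ t ih => rw [pow_succ]; exact Qp_mul ih hf

lemma Qp_base {A : Type*} [CommRing A] {p : ℕ} (hp : p ≠ 0) (t : ℕ) :
    ∀ m, ¬ p ∣ m → coeff (R := A) m (1 - X ^ (p * t) : PowerSeries A) = 0 := by
  intro m hm
  have hm0 : m ≠ 0 := by rintro rfl; exact hm (dvd_zero p)
  have hmp : m ≠ p * t := by rintro rfl; exact hm (dvd_mul_right p t)
  rw [map_sub, coeff_one, if_neg hm0, coeff_X_pow, if_neg hmp, sub_zero]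

/-- Coefficients of `(1-X)^r` vanish beyond degree `r`. -/
lemma deg_bound {A : Type*} [CommRing A] (r : ℕ) :
    ∀ a, r < a → coeff (R := A) a ((1 - X : PowerSeries A) ^ r) = 0 := by
  induction r with
  | zero =>
      intro a ha
      rw [pow_zero, coeff_one, if_neg (by omega)]
  | succ r ih =>
      intro a ha
      obtain ⟨b, rfl⟩ : ∃ b, a = b + 1 := ⟨a - 1, by omega⟩
      rw [pow_succ, mul_sub, mul_one, map_sub, coeff_succ_mul_X, ih _ (by omega),
        ih _ (by omega), sub_zero]

lemma pow_one_add {A : Type*} [CommRing A] (x a : A) (h : a = 1 + x * a) (t : ℕ) :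
    ∃ E, a ^ t = 1 + x * E := by
  induction t with
  | zero => exact ⟨0, by simp⟩
  | succ t ih =>
      obtain ⟨E, hE⟩ := ih
      exact ⟨a + E * a, by rw [pow_succ]; linear_combination a * hE + h⟩

theorem stmt17 (p k r : ℕ) (hp : p.Prime) (hp3 : 3 ≤ p) (hk : 1 ≤ k)
    (hdvd : p ^ 2 * (p - 1) ∣ k) (hr1 : 1 ≤ r) (hr2 : r ≤ p - 2)
    (n : ℕ) (hn : k / (p - 1) < n) (hmod1 : r + 1 ≤ n % p) (hmod2 : n % p ≤ p - 1) :
    (p : ℤ) ^ padicValNat p k ∣ Acoef p (k - r) n := by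
  classical
  have hp2 : 2 ≤ p := hp.two_le
  have hodd : Odd p := hp.odd_of_ne_two (by omega)
  have hk0 : k ≠ 0 := by omega
  haveI : Fact p.Prime := ⟨hp⟩
  set v := padicValNat p k with hv
  -- arithmetic preliminaries
  have hp1dvd : (p - 1) ∣ k := (Dvd.intro_left (p ^ 2) rfl).trans hdvd
  set K := k / (p - 1) with hKdef
  have hkK : (p - 1) * K = k := Nat.mul_div_cancel' hp1dvd
  have hK0 : K ≠ 0 := by rintro h; rw [h, Nat.mul_zero] at hkK; omega
  have hp2K : p ^ 2 ∣ K := by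
    obtain ⟨m, hm⟩ := hdvd
    refine ⟨m, ?_⟩
    rw [hKdef, hm, show p ^ 2 * (p - 1) * m = (p - 1) * (p ^ 2 * m) by ring,
      Nat.mul_div_cancel_left _ (by omega : 0 < p - 1)]
  have hpK : p ∣ K := (dvd_pow_self p two_ne_zero).trans hp2K
  have hvK : padicValNat p K = v := by
    have h1 : padicValNat p ((p - 1) * K) = padicValNat p (p - 1) + padicValNat p K :=
      padicValNat.mul (by omega) hK0
    have h2 : padicValNat p (p - 1) = 0 := padicValNat.eq_zero_of_not_dvd (by
      intro h; have := Nat.le_of_dvd (by omega) h; omega)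
    rw [hkK] at h1
    rw [hv, h1, h2, zero_add]
  have hpvK : p ^ v ∣ K := hvK ▸ pow_padicValNat_dvd
  have hv1 : 1 ≤ v := by
    rw [← hvK]
    exact one_le_padicValNat_of_dvd hK0 hpK
  have hKp : p * (K / p) = K := Nat.mul_div_cancel' hpK
  have hpv1 : p ^ (v - 1) ∣ K / p := by
    obtain ⟨t, ht⟩ := hpvK
    refine ⟨t, ?_⟩
    have hKt : K = p * (p ^ (v - 1) * t) := by
      have hvv : p ^ v = p * p ^ (v - 1) := by
        rw [← pow_succ']; congr 1; omega
      rw [ht, hvv, mul_assoc]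
    rw [hKt, Nat.mul_div_cancel_left _ (by omega : 0 < p)]
  have hrk : r ≤ k := by
    have h1 : p ^ 2 * (p - 1) ≤ k := Nat.le_of_dvd (by omega) hdvd
    have h2 : p ≤ p ^ 2 := Nat.le_self_pow two_ne_zero p
    have h3 : p ^ 2 ≤ p ^ 2 * (p - 1) := Nat.le_mul_of_pos_right _ (by omega)
    omega
  -- power series setup
  haveI : NeZero (p ^ v) := ⟨pow_ne_zero _ (by omega)⟩
  set F : ℕ → PowerSeries (ZMod (p ^ v)) := fun i => 1 - X ^ p ^ i with hF
  have hFc : ∀ i, constantCoeff (R := ZMod (p ^ v)) (F i) = ((1 : (ZMod (p ^ v))ˣ) : ZMod (p ^ v)) := by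
    intro i
    simp only [hF, map_sub, map_one, map_pow, constantCoeff_X]
    rw [zero_pow (pow_ne_zero i (by omega : p ≠ 0)), sub_zero, Units.val_one]
  set G : ℕ → PowerSeries (ZMod (p ^ v)) := fun i => PowerSeries.invOfUnit (F i) 1 with hG
  have hFG : ∀ i, F i * G i = 1 := fun i => PowerSeries.mul_invOfUnit (F i) 1 (hFc i)
  set H : PowerSeries (ZMod (p ^ v)) := ∏ i ∈ Finset.range (n + 1), F i with hH
  set I : PowerSeries (ZMod (p ^ v)) := G (n + 1) with hI
  set J : PowerSeries (ZMod (p ^ v)) := ∏ i ∈ Finset.range (n + 1), G i with hJ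
  have hHJ : H * J = 1 := by
    rw [hH, hJ, ← Finset.prod_mul_distrib]
    exact Finset.prod_eq_one fun i _ => hFG i
  -- the Acoef product over ℤ
  set PZ : PowerSeries ℤ := ∏ i ∈ Finset.range (n + 1),
      (PowerSeries.invOfUnit (1 - X ^ p ^ i : PowerSeries ℤ) 1) ^ (k - r) with hPZ
  have hcc : ∀ i : ℕ, constantCoeff (R := ℤ) (1 - X ^ p ^ i) = ((1 : ℤˣ) : ℤ) := by
    intro i
    rw [map_sub, map_one, map_pow, constantCoeff_X,
      zero_pow (pow_ne_zero i (by omega : p ≠ 0)), sub_zero, Units.val_one]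
  have hz : PZ * (∏ i ∈ Finset.range (n + 1), (1 - X ^ p ^ i : PowerSeries ℤ)) ^ (k - r) = 1 := by
    rw [hPZ, ← Finset.prod_pow, ← Finset.prod_mul_distrib]
    refine Finset.prod_eq_one fun i _ => ?_
    rw [← mul_pow, mul_comm, PowerSeries.mul_invOfUnit _ _ (hcc i), one_pow]
  have hπH : PowerSeries.map (Int.castRingHom (ZMod (p ^ v)))
      (∏ i ∈ Finset.range (n + 1), (1 - X ^ p ^ i : PowerSeries ℤ)) = H := by
    rw [map_prod, hH]
    refine Finset.prod_congr rfl fun i _ => ?_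
    rw [map_sub, map_one, map_pow, PowerSeries.map_X]
  have hπ : PowerSeries.map (Int.castRingHom (ZMod (p ^ v))) PZ * H ^ (k - r) = 1 := by
    have h := congrArg (PowerSeries.map (Int.castRingHom (ZMod (p ^ v)))) hz
    simp only [map_mul, map_pow, map_one] at h
    rw [hπH] at h
    exact h
  -- step identity (F i)^p = F (i+1) + p * w i
  have hstep : ∀ i : ℕ, ∃ w, (F i) ^ p = F (i + 1) + (p : PowerSeries (ZMod (p ^ v))) * w := by
    intro i
    obtain ⟨w, hw⟩ := aux_pow_p hp hodd ((X : PowerSeries (ZMod (p ^ v))) ^ p ^ i)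
    refine ⟨w, ?_⟩
    simp only [hF]
    rw [hw, ← pow_mul, ← pow_succ]
  choose w hw using hstep
  obtain ⟨c, hc⟩ := aux_prod_add (Finset.range (n + 1)) ((p : PowerSeries (ZMod (p ^ v))))
    (fun i => F (i + 1)) w
  have hHp : H ^ p = (∏ i ∈ Finset.range (n + 1), F (i + 1)) + (p : PowerSeries (ZMod (p ^ v))) * c := by
    rw [hH, ← Finset.prod_pow, Finset.prod_congr rfl fun i _ => hw i]
    exact hc
  have hprodshift : F 0 * ∏ i ∈ Finset.range (n + 1), F (i + 1) = H * F (n + 1) := by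
    have h1 := Finset.prod_range_succ F (n + 1)
    have h2 := Finset.prod_range_succ' F (n + 1)
    rw [hH, mul_comm (F 0), ← h2, h1]
  have hkey2 : F 0 * H ^ p * I = H + (p : PowerSeries (ZMod (p ^ v))) * (F 0 * c * I) := by
    have h3 : F (n + 1) * I = 1 := hFG (n + 1)
    calc F 0 * H ^ p * I
        = (F 0 * ∏ i ∈ Finset.range (n + 1), F (i + 1)) * I
          + (p : PowerSeries (ZMod (p ^ v))) * (F 0 * c * I) := by rw [hHp]; ring
      _ = H * (F (n + 1) * I) + (p : PowerSeries (ZMod (p ^ v))) * (F 0 * c * I) := by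
          rw [hprodshift]; ring
      _ = H + (p : PowerSeries (ZMod (p ^ v))) * (F 0 * c * I) := by rw [h3, mul_one]
  -- divisibility inputs
  have hzero : ∀ m : ℕ, p ^ v ∣ m → ((m : ℕ) : PowerSeries (ZMod (p ^ v))) = 0 := by
    intro m hm
    have h1 : ((m : ℕ) : ZMod (p ^ v)) = 0 := (ZMod.natCast_eq_zero_iff m (p ^ v)).mpr hm
    rw [← map_natCast (PowerSeries.C (R := ZMod (p ^ v))) m, h1, map_zero]
  have hchK : ∀ j, 1 ≤ j → p ^ v ∣ K.choose j * p ^ j := by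
    intro j hj
    have h := key_dvd hp (v - 1) K j ((pow_dvd_pow p (by omega)).trans hpvK) hj
    rwa [show v - 1 + 1 = v by omega] at h
  have hchKp : ∀ j, 1 ≤ j → p ^ v ∣ (K / p).choose j * p ^ j := by
    intro j hj
    have h := key_dvd hp (v - 1) (K / p) j hpv1 hj
    rwa [show v - 1 + 1 = v by omega] at h
  -- raise to the K-th power
  have hD : (F 0) ^ K * (H ^ p) ^ K * I ^ K = H ^ K := by
    have h := binom_kill p v K hzero hchK H (F 0 * c * I)
    rw [← hkey2] at h
    rw [← mul_pow, ← mul_pow]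
    exact h
  have hpk : p * K = K + k := by
    have h1 : 1 + (p - 1) = p := by omega
    calc p * K = (1 + (p - 1)) * K := by rw [h1]
      _ = K + (p - 1) * K := by ring
      _ = K + k := by rw [hkK]
  have hE : F 0 ^ K * H ^ k * I ^ K = 1 := by
    have h1 : (H ^ p) ^ K = H ^ K * H ^ k := by rw [← pow_mul, hpk, pow_add]
    rw [h1] at hD
    have hJH : J ^ K * H ^ K = 1 := by rw [← mul_pow, mul_comm J H, hHJ, one_pow]
    calc F 0 ^ K * H ^ k * I ^ K
        = (J ^ K * H ^ K) * (F 0 ^ K * H ^ k * I ^ K) := by rw [hJH, one_mul]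
      _ = J ^ K * (F 0 ^ K * (H ^ K * H ^ k) * I ^ K) := by ring
      _ = J ^ K * H ^ K := by rw [hD]
      _ = 1 := hJH
  have hPeq : PowerSeries.map (Int.castRingHom (ZMod (p ^ v))) PZ = F 0 ^ K * I ^ K * H ^ r := by
    have h2 : (F 0 ^ K * I ^ K * H ^ r) * H ^ (k - r) = 1 := by
      calc (F 0 ^ K * I ^ K * H ^ r) * H ^ (k - r)
          = F 0 ^ K * I ^ K * (H ^ r * H ^ (k - r)) := by ring
        _ = F 0 ^ K * I ^ K * H ^ (r + (k - r)) := by rw [pow_add]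
        _ = F 0 ^ K * H ^ k * I ^ K := by rw [show r + (k - r) = k by omega]; ring
        _ = 1 := hE
    calc PowerSeries.map (Int.castRingHom (ZMod (p ^ v))) PZ
        = PowerSeries.map (Int.castRingHom (ZMod (p ^ v))) PZ
          * ((F 0 ^ K * I ^ K * H ^ r) * H ^ (k - r)) := by rw [h2, mul_one]
      _ = (PowerSeries.map (Int.castRingHom (ZMod (p ^ v))) PZ * H ^ (k - r))
          * (F 0 ^ K * I ^ K * H ^ r) := by ring
      _ = F 0 ^ K * I ^ K * H ^ r := by rw [hπ, one_mul]
  -- coefficient computation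
  have hfin : coeff (R := ZMod (p ^ v)) n (PowerSeries.map (Int.castRingHom (ZMod (p ^ v))) PZ) = 0 := by
    rw [hPeq]
    have hIrec : I = 1 + (X : PowerSeries (ZMod (p ^ v))) ^ p ^ (n + 1) * I := by
      have h := hFG (n + 1)
      simp only [hF] at h
      rw [← hI] at h
      linear_combination h
    obtain ⟨E, hEK⟩ := pow_one_add _ _ hIrec K
    rw [hEK]
    have hF0 : F 0 = 1 - X := by simp only [hF, pow_zero, pow_one]
    have hsplit : F 0 ^ K * (1 + (X : PowerSeries (ZMod (p ^ v))) ^ p ^ (n + 1) * E) * H ^ r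
        = F 0 ^ K * H ^ r + X ^ p ^ (n + 1) * (E * F 0 ^ K * H ^ r) := by ring
    rw [hsplit, map_add]
    have hXm : coeff (R := ZMod (p ^ v)) n
        ((X : PowerSeries (ZMod (p ^ v))) ^ p ^ (n + 1) * (E * F 0 ^ K * H ^ r)) = 0 := by
      rw [PowerSeries.coeff_X_pow_mul', if_neg]
      intro hle
      have h1 := Nat.lt_pow_self (n := n) hp.one_lt
      have h2 : p ^ n ≤ p ^ (n + 1) := Nat.pow_le_pow_right hp.pos (by omega)
      omega
    rw [hXm, add_zero]
    obtain ⟨w2, hw2⟩ := aux_pow_p hp hodd (X : PowerSeries (ZMod (p ^ v)))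
    have hbin : ((1 : PowerSeries (ZMod (p ^ v))) - X) ^ K = (1 - X ^ p) ^ (K / p) := by
      calc ((1 : PowerSeries (ZMod (p ^ v))) - X) ^ K = ((1 - X) ^ p) ^ (K / p) := by
            rw [← pow_mul, hKp]
        _ = ((1 - X ^ p) + (p : PowerSeries (ZMod (p ^ v))) * w2) ^ (K / p) := by rw [hw2]
        _ = (1 - X ^ p) ^ (K / p) := binom_kill p v (K / p) hzero hchKp _ _
    have hHr : H ^ r = (∏ i ∈ Finset.range n, F (i + 1) ^ r) * F 0 ^ r := by
      rw [hH, ← Finset.prod_pow]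
      exact Finset.prod_range_succ' (fun i => F i ^ r) n
    rw [hF0, hbin, hHr, hF0]
    have hg : ∀ m, ¬ p ∣ m → coeff (R := ZMod (p ^ v)) m
        ((1 - X ^ p) ^ (K / p) * ∏ i ∈ Finset.range n, F (i + 1) ^ r) = 0 := by
      have hpne : p ≠ 0 := by omega
      refine Qp_mul (Qp_pow hpne ?_ (K / p)) ?_
      · have hxp : (X : PowerSeries (ZMod (p ^ v))) ^ p = X ^ (p * 1) := by rw [mul_one]
        rw [hxp]
        exact Qp_base hpne 1
      · refine Finset.prod_induction (fun i => F (i + 1) ^ r)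
          (fun g => ∀ m, ¬ p ∣ m → coeff (R := ZMod (p ^ v)) m g = 0)
          (fun a b ha hb => Qp_mul ha hb) (Qp_one hpne) ?_
        intro i _
        refine Qp_pow hpne ?_ r
        simp only [hF]
        rw [pow_succ']
        exact Qp_base hpne (p ^ i)
    have hfinal : coeff (R := ZMod (p ^ v)) n
        ((1 - X) ^ r * ((1 - X ^ p) ^ (K / p) * ∏ i ∈ Finset.range n, F (i + 1) ^ r)) = 0 := by
      rw [PowerSeries.coeff_mul]
      refine Finset.sum_eq_zero fun x hx => ?_
      have hxm : x.1 + x.2 = n := Finset.HasAntidiagonal.mem_antidiagonal.mp hx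
      by_cases h1 : r < x.1
      · rw [deg_bound r x.1 h1, zero_mul]
      · push_neg at h1
        have h2 : ¬ p ∣ x.2 := by
          rintro ⟨t, ht⟩
          have hmn : n % p = x.1 := by
            rw [← hxm, ht, Nat.add_mul_mod_self_left]
            exact Nat.mod_eq_of_lt (by omega)
          omega
        rw [hg _ h2, mul_zero]
    have hcomm : ((1 - X ^ p) ^ (K / p) * ((∏ i ∈ Finset.range n, F (i + 1) ^ r) * (1 - X) ^ r)
          : PowerSeries (ZMod (p ^ v)))
        = (1 - X) ^ r * ((1 - X ^ p) ^ (K / p) * ∏ i ∈ Finset.range n, F (i + 1) ^ r) := by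
      ring
    rw [hcomm]
    exact hfinal
  -- conclude
  have hAc : Acoef p (k - r) n = coeff (R := ℤ) n PZ := rfl
  rw [hAc]
  have h9 : ((coeff (R := ℤ) n PZ : ℤ) : ZMod (p ^ v)) = 0 := by
    have := hfin
    rwa [PowerSeries.coeff_map] at this
  have h10 := (ZMod.intCast_zmod_eq_zero_iff_dvd (coeff (R := ℤ) n PZ) (p ^ v)).mp h9
  rwa [Nat.cast_pow] at h10
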